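/- For every n ≥ 1, a polynomial h ∈ ℂ[z₁,…,zₙ] satisfies both h(z) ≠ 0 whenever Im(zⱼ) > 0 for all j, and h(z) ≠ 0 whenever Im(zⱼ) < 0 for all j, if and only if h = c·f for some nonzero c ∈ ℂ and some real stable polynomial f ∈ ℝ[z₁,…,zₙ]. That is, H_n(ℂ) ∩ H_n(ℂ)⁻ = {c·f : c ∈ ℂ∖{0}, f ∈ H_n(ℝ)}. -/

import Mathlib

open MvPolynomial

def IsStable {σ : Type*} (f : MvPolynomial σ ℂ) : Prop :=
  ∀ z : σ → ℂ, (∀ i, 0 < (z i).im) → eval z f ≠ 0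

def IsRealStable {σ : Type*} (f : MvPolynomial σ ℝ) : Prop :=
  IsStable (f.map (algebraMap ℝ ℂ))

noncomputable def lineQ {n : ℕ} (h : MvPolynomial (Fin n) ℂ) (a b : Fin n → ℝ) : Polynomial ℂ :=
  eval₂ Polynomial.C (fun j => Polynomial.C (a j : ℂ) + Polynomial.C (b j : ℂ) * Polynomial.X) h

lemma lineQ_eval {n : ℕ} (h : MvPolynomial (Fin n) ℂ) (a b : Fin n → ℝ) (t : ℂ) :
    (lineQ h a b).eval t = eval (fun j => (a j : ℂ) + (b j : ℂ) * t) h := by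
  have H := MvPolynomial.eval₂_comp_left (Polynomial.evalRingHom t) (Polynomial.C (R := ℂ))
      (fun j => Polynomial.C (a j : ℂ) + Polynomial.C (b j : ℂ) * Polynomial.X) h
  simp only [Polynomial.coe_evalRingHom] at H
  rw [lineQ, H]
  rw [show (Polynomial.evalRingHom t).comp (Polynomial.C (R := ℂ)) = RingHom.id ℂ by
    ext x; simp]
  rw [MvPolynomial.eval₂_id]
  have : (Polynomial.eval t ∘ fun j => Polynomial.C ((a j : ℂ)) + Polynomial.C ((b j : ℂ)) * Polynomial.X)
      = fun j => (a j : ℂ) + (b j : ℂ) * t := by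
    funext j; simp
  rw [this]

lemma map_eval_real {σ : Type*} (p : MvPolynomial σ ℝ) (x : σ → ℝ) :
    eval (fun j => (x j : ℂ)) (p.map (algebraMap ℝ ℂ)) = ((eval x p : ℝ) : ℂ) := by
  rw [MvPolynomial.eval_map]
  have H := MvPolynomial.eval₂_comp_left (Complex.ofRealHom) (RingHom.id ℝ) x p
  simp only [MvPolynomial.eval₂_id] at H
  rw [show ((eval x p : ℝ) : ℂ) = Complex.ofRealHom (eval x p) from rfl, H]
  rfl

lemma conj_eval_map {σ : Type*} (p : MvPolynomial σ ℝ) (z : σ → ℂ) :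
    (starRingEnd ℂ) (eval z (p.map (algebraMap ℝ ℂ))) =
      eval (fun j => (starRingEnd ℂ) (z j)) (p.map (algebraMap ℝ ℂ)) := by
  rw [MvPolynomial.eval_map, MvPolynomial.eval_map]
  have H := MvPolynomial.eval₂_comp_left (starRingEnd ℂ) (algebraMap ℝ ℂ) z p
  rw [H]
  congr 1
  ext r
  simp [Complex.conj_ofReal]

lemma exists_re_im {σ : Type*} (d : MvPolynomial σ ℂ) :
    ∃ p q : MvPolynomial σ ℝ,
      d = p.map (algebraMap ℝ ℂ) + C Complex.I * q.map (algebraMap ℝ ℂ) := by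
  induction d using MvPolynomial.induction_on with
  | C a =>
    refine ⟨C a.re, C a.im, ?_⟩
    rw [MvPolynomial.map_C, MvPolynomial.map_C, ← MvPolynomial.C_mul, ← MvPolynomial.C_add]
    congr 1
    simp [Complex.ext_iff]
  | add p q hp hq =>
    obtain ⟨p1, p2, hp⟩ := hp
    obtain ⟨q1, q2, hq⟩ := hq
    exact ⟨p1 + q1, p2 + q2, by rw [hp, hq]; simp only [map_add, MvPolynomial.C_mul]; ring⟩
  | mul_X p i hp =>
    obtain ⟨p1, p2, hp⟩ := hp
    exact ⟨p1 * X i, p2 * X i, by rw [hp]; simp only [map_mul, MvPolynomial.map_X]; ring⟩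

theorem stmt3 {n : ℕ} (hn : 1 ≤ n) (h : MvPolynomial (Fin n) ℂ) :
    (IsStable h ∧ (∀ z : Fin n → ℂ, (∀ i, (z i).im < 0) → eval z h ≠ 0)) ↔
      ∃ (c : ℂ) (f : MvPolynomial (Fin n) ℝ), c ≠ 0 ∧ IsRealStable f ∧
        h = C c * f.map (algebraMap ℝ ℂ) := by
  constructor
  · rintro ⟨hs, hs'⟩
    -- notation
    set E : (Fin n → ℝ) → ℂ := fun x => eval (fun j => (x j : ℂ)) h with hE
    -- key line lemma
    have key : ∀ u v : Fin n → ℝ, (∀ j, u j < v j) →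
        (starRingEnd ℂ) (E u) * E v = E u * (starRingEnd ℂ) (E v) := by
      intro u v huv
      set b : Fin n → ℝ := fun j => v j - u j with hb
      set q := lineQ h u b with hq
      have hq0 : q ≠ 0 := by
        intro h0
        have := hs (fun j => (u j : ℂ) + (b j : ℂ) * Complex.I) (by
          intro j; simp [hb]; linarith [huv j])
        rw [← lineQ_eval h u b Complex.I, ← hq, h0] at this
        simp at this
      have hroots : ∀ r ∈ q.roots, r.im = 0 := by
        intro r hr
        have hr0 : q.eval r = 0 := Polynomial.isRoot_of_mem_roots hr
        rw [lineQ_eval] at hr0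
        by_contra him
        rcases lt_or_gt_of_ne him with hlt | hgt
        · exact hs' _ (fun j => by
            simp only [Complex.add_im, Complex.ofReal_im, Complex.mul_im, Complex.ofReal_re,
              Complex.ofReal_im, zero_add, zero_mul, add_zero]
            have : 0 < b j := by simp [hb]; linarith [huv j]
            nlinarith) hr0
        · exact hs _ (fun j => by
            simp only [Complex.add_im, Complex.ofReal_im, Complex.mul_im, Complex.ofReal_re,
              Complex.ofReal_im, zero_add, zero_mul, add_zero]
            have : 0 < b j := by simp [hb]; linarith [huv j]
            nlinarith) hr0
      set c := q.leadingCoeff with hc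
      have hfact : q = Polynomial.C c * (q.roots.map fun r => Polynomial.X - Polynomial.C r).prod :=
        Polynomial.Splits.eq_prod_roots (IsAlgClosed.splits q)
      have heval : ∀ t : ℝ, q.eval (t : ℂ) = c * (q.roots.map fun r => (t : ℂ) - r).prod := by
        intro t
        conv_lhs => rw [hfact]
        rw [Polynomial.eval_mul, Polynomial.eval_C, Polynomial.eval_multiset_prod,
          Multiset.map_map]
        congr 1
        apply congrArg Multiset.prod
        apply Multiset.map_congr rfl
        intro r _
        simp
      have hconj : ∀ t : ℝ, (starRingEnd ℂ) (q.eval (t : ℂ)) =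
          (starRingEnd ℂ) c * (q.roots.map fun r => (t : ℂ) - r).prod := by
        intro t
        rw [heval, map_mul]
        congr 1
        rw [← Multiset.prod_hom _ (starRingEnd ℂ), Multiset.map_map]
        apply congrArg
        apply Multiset.map_congr rfl
        intro r hr
        rw [Function.comp_apply, Complex.conj_eq_iff_im]
        simp [hroots r hr]
      have hEu : E u = q.eval ((0 : ℝ) : ℂ) := by
        rw [lineQ_eval]
        have : (fun j => (u j : ℂ) + (b j : ℂ) * (((0 : ℝ)) : ℂ)) = fun j => ((u j : ℝ) : ℂ) := by
          funext j; push_cast; ring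
        rw [this]
      have hEv : E v = q.eval ((1 : ℝ) : ℂ) := by
        rw [lineQ_eval]
        have : (fun j => (u j : ℂ) + (b j : ℂ) * (((1 : ℝ)) : ℂ)) = fun j => ((v j : ℝ) : ℂ) := by
          funext j; rw [hb]; push_cast; ring
        rw [this]
      rw [hEu, hEv, hconj, hconj, heval, heval]
      ring
    -- find a real point where h is nonzero, above a given point
    have exists_pt : ∀ m : Fin n → ℝ, ∃ s : ℝ, 0 < s ∧ E (fun j => m j + s) ≠ 0 := by
      intro m
      set q := lineQ h m (fun _ => 1) with hq
      have hq0 : q ≠ 0 := by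
        intro h0
        have := hs (fun j => (m j : ℂ) + 1 * Complex.I) (by intro j; simp)
        rw [show (fun j => (m j : ℂ) + 1 * Complex.I) =
          (fun j => (m j : ℂ) + ((1 : ℝ) : ℂ) * Complex.I) by push_cast; rfl,
          ← lineQ_eval h m (fun _ => 1) Complex.I, ← hq, h0] at this
        simp at this
      have hfin : {s : ℝ | q.IsRoot ((s : ℝ) : ℂ)}.Finite := by
        have : {s : ℝ | q.IsRoot ((s : ℝ) : ℂ)} =
            Complex.ofReal ⁻¹' {z | q.IsRoot z} := rfl
        rw [this]
        exact Set.Finite.preimage (Set.injOn_of_injective Complex.ofReal_injective)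
          (Polynomial.finite_setOf_isRoot hq0)
      have hinf : (Set.Ioi (0 : ℝ)).Infinite := Set.Ioi_infinite 0
      obtain ⟨s, hs1, hs2⟩ := (hinf.diff hfin).nonempty
      refine ⟨s, hs1, ?_⟩
      intro h0
      apply hs2
      show q.IsRoot _
      rw [Polynomial.IsRoot, lineQ_eval]
      have : (fun j => (m j : ℂ) + (((1 : ℝ)) : ℂ) * (s : ℂ)) = fun j => (((m j + s : ℝ)) : ℂ) := by
        funext j; push_cast; ring
      rw [this]
      exact h0
    -- base point
    obtain ⟨s0, hs0, hy0⟩ := exists_pt (fun _ => 0)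
    set y₀ : Fin n → ℝ := fun j => (0 : ℝ) + s0 with hy₀def
    have hy0' : E y₀ ≠ 0 := hy0
    set c := E y₀ with hcdef
    -- E is "real up to phase": conj c * E x is real for all x
    have main : ∀ x : Fin n → ℝ, ((starRingEnd ℂ) c * E x).im = 0 := by
      intro x
      obtain ⟨s, hspos, hw⟩ := exists_pt (fun j => max (x j) (y₀ j))
      set w : Fin n → ℝ := fun j => max (x j) (y₀ j) + s with hwdef
      have h1 : ∀ j, x j < w j := fun j => by
        have := le_max_left (x j) (y₀ j); simp [hwdef]; linarith
      have h2 : ∀ j, y₀ j < w j := fun j => by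
        have := le_max_right (x j) (y₀ j); simp [hwdef]; linarith
      have A1 := key x w h1
      have A2 := key y₀ w h2
      rw [← Complex.conj_eq_iff_im]
      have hWne : E w * (starRingEnd ℂ) (E w) ≠ 0 :=
        mul_ne_zero hw (by simpa using hw)
      apply mul_right_cancel₀ hWne
      calc (starRingEnd ℂ) ((starRingEnd ℂ) c * E x) * (E w * (starRingEnd ℂ) (E w))
          = ((starRingEnd ℂ) (E x) * E w) * (E y₀ * (starRingEnd ℂ) (E w)) := by
            simp only [map_mul, RingHomCompTriple.comp_apply, RingHom.id_apply,
              Complex.conj_conj, hcdef]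
            ring
        _ = (E x * (starRingEnd ℂ) (E w)) * ((starRingEnd ℂ) (E y₀) * E w) := by
            rw [A1, ← A2]; try ring
        _ = ((starRingEnd ℂ) c * E x) * (E w * (starRingEnd ℂ) (E w)) := by
            rw [hcdef]; ring
    -- decompose C (conj c) * h
    obtain ⟨p, q2, hpq⟩ := exists_re_im (C ((starRingEnd ℂ) c) * h)
    have hq2 : q2 = 0 := by
      apply MvPolynomial.funext
      intro x
      have h1 : eval (fun j => ((x j : ℝ) : ℂ)) (C ((starRingEnd ℂ) c) * h) =
          (starRingEnd ℂ) c * E x := by simp [hE]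
      rw [hpq] at h1
      simp only [map_add, map_mul, eval_C, map_eval_real] at h1
      have him : (((eval x p : ℝ) : ℂ) + Complex.I * ((eval x q2 : ℝ) : ℂ)).im = 0 := by
        rw [h1]; exact main x
      simp only [Complex.add_im, Complex.mul_im, Complex.I_re, Complex.I_im,
        Complex.ofReal_re, Complex.ofReal_im, zero_mul, one_mul, zero_add, add_zero,
        mul_zero] at him
      simpa using him
    rw [hq2] at hpq
    simp only [map_zero, mul_zero, add_zero] at hpq
    have hcne : c ≠ 0 := hy0'
    have hccne : (starRingEnd ℂ) c ≠ 0 := by simpa using hcne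
    refine ⟨((starRingEnd ℂ) c)⁻¹, p, inv_ne_zero hccne, ?_, ?_⟩
    · intro z hz
      have : eval z (p.map (algebraMap ℝ ℂ)) = (starRingEnd ℂ) c * eval z h := by
        rw [← hpq]; simp
      rw [this]
      exact mul_ne_zero hccne (hs z hz)
    · have : C ((starRingEnd ℂ) c)⁻¹ * (C ((starRingEnd ℂ) c) * h) =
          C ((starRingEnd ℂ) c)⁻¹ * p.map (algebraMap ℝ ℂ) := by rw [hpq]
      rw [← mul_assoc, ← MvPolynomial.C_mul, inv_mul_cancel₀ hccne] at this
      simpa using this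
  · rintro ⟨c, f, hc, hf, rfl⟩
    constructor
    · intro z hz
      rw [map_mul, eval_C]
      exact mul_ne_zero hc (hf z hz)
    · intro z hz
      rw [map_mul, eval_C]
      refine mul_ne_zero hc ?_
      intro h0
      have hw : ∀ i, 0 < ((starRingEnd ℂ) (z i)).im := by
        intro i; simp [Complex.conj_im]; linarith [hz i]
      apply hf (fun i => (starRingEnd ℂ) (z i)) hw
      rw [← conj_eval_map, h0, map_zero]
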